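/- Let α > 0 and let f : (0,∞) → ℝ be given by f(x) = e^(−αx). Then for every integer n ≥ 1 and all pairwise distinct x_1, …, x_n ∈ (0,∞), one has 0 < Σ_{i=1}^n f(x_i) / Π_{j≠i} (x_j − x_i) < α^(n−1)/(n−1)!. -/

import Mathlib

open Finset Polynomial intervalIntegral

lemma sum_inv_prod_sub_eq_zero {m : ℕ} (hm : 2 ≤ m) (x : Fin m → ℝ)
    (hinj : Function.Injective x) :
    ∑ i, (∏ j ∈ Finset.univ.erase i, (x j - x i))⁻¹ = 0 := by
  have hinjOn : Set.InjOn x (univ : Finset (Fin m)) := hinj.injOn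
  have hbasis := Lagrange.sum_basis hinjOn ⟨⟨0, by omega⟩, mem_univ _⟩
  have hcoeff := congrArg (fun p => Polynomial.coeff p (m - 1)) hbasis
  simp only [Polynomial.finset_sum_coeff, Polynomial.coeff_one] at hcoeff
  have hm1 : ¬ (m - 1 = 0) := by omega
  rw [if_neg hm1] at hcoeff
  have hterm : ∀ i : Fin m, (Lagrange.basis univ x i).coeff (m - 1)
      = ∏ j ∈ Finset.univ.erase i, (x i - x j)⁻¹ := by
    intro i
    have hdeg : (Lagrange.basis univ x i).natDegree = m - 1 := by
      rw [Lagrange.natDegree_basis hinjOn (mem_univ i), card_univ, Fintype.card_fin]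
    rw [← hdeg, Polynomial.coeff_natDegree, Lagrange.basis, Polynomial.leadingCoeff_prod]
    refine Finset.prod_congr rfl fun j hj => ?_
    rw [Lagrange.basisDivisor, Polynomial.leadingCoeff_mul, Polynomial.leadingCoeff_C,
      Polynomial.leadingCoeff_X_sub_C, mul_one]
  simp only [hterm] at hcoeff
  have hswap : ∀ i : Fin m, (∏ j ∈ Finset.univ.erase i, (x j - x i))⁻¹
      = (-1 : ℝ) ^ (m - 1) * ∏ j ∈ Finset.univ.erase i, (x i - x j)⁻¹ := by
    intro i
    rw [← Finset.prod_inv_distrib]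
    have h1 : ∀ j ∈ Finset.univ.erase i, (x j - x i)⁻¹ = (-1) * (x i - x j)⁻¹ := by
      intro j _; rw [← neg_sub (x i) (x j), inv_neg]; ring
    rw [Finset.prod_congr rfl h1, Finset.prod_mul_distrib, Finset.prod_const,
      Finset.card_erase_of_mem (mem_univ i), card_univ, Fintype.card_fin]
  simp only [hswap, ← Finset.mul_sum, hcoeff, mul_zero]

lemma prod_erase_fin_succ {n : ℕ} (g : Fin (n + 1) → ℝ) (i : Fin n) :
    ∏ j ∈ Finset.univ.erase i.succ, g j
      = g 0 * ∏ j ∈ Finset.univ.erase i, g j.succ := by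
  have hemb : i.succ = (⟨Fin.succ, Fin.succ_injective n⟩ : Fin n ↪ Fin (n + 1)) i := rfl
  rw [Fin.univ_succ, Finset.erase_cons_of_ne _ (Fin.succ_ne_zero i).symm, Finset.prod_cons,
    hemb, ← Finset.map_erase, Finset.prod_map]
  rfl

lemma integral_exp_mul' (k α : ℝ) (hk : k ≠ 0) :
    ∫ s in (0:ℝ)..α, Real.exp (k * s) = (Real.exp (k * α) - 1) / k := by
  rw [integral_comp_mul_left (fun t => Real.exp t) hk, mul_zero, integral_exp,
    Real.exp_zero, smul_eq_mul]
  ring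

lemma key (n : ℕ) : ∀ (x : Fin (n + 1) → ℝ), (∀ i, 0 < x i) → Function.Injective x →
    ∀ α : ℝ, 0 < α →
    0 < (∑ i, Real.exp (-α * x i) / ∏ j ∈ Finset.univ.erase i, (x j - x i)) ∧
    (∑ i, Real.exp (-α * x i) / ∏ j ∈ Finset.univ.erase i, (x j - x i))
      < α ^ n / n.factorial := by
  induction n with
  | zero =>
    intro x hx _ α hα
    have h0 : (Finset.univ : Finset (Fin (0 + 1))).erase 0 = ∅ := rfl
    rw [Fin.sum_univ_succ, Fin.sum_univ_zero, h0]
    simp only [Finset.prod_empty, div_one, pow_zero, Nat.factorial_zero, Nat.cast_one,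
      add_zero]
    refine ⟨Real.exp_pos _, ?_⟩
    exact Real.exp_lt_one_iff.mpr (by nlinarith [hx 0])
  | succ n ih =>
    intro x hx hinj α hα
    set y : Fin (n + 1) → ℝ := x ∘ Fin.succ with hy
    have hyinj : Function.Injective y := hinj.comp (Fin.succ_injective _)
    have hypos : ∀ i, 0 < y i := fun i => hx _
    have hx0 : 0 < x 0 := hx 0
    set C : Fin (n + 1) → ℝ := fun i => ∏ j ∈ Finset.univ.erase i, (y j - y i) with hC
    set P : Fin (n + 2) → ℝ := fun i => ∏ j ∈ Finset.univ.erase i, (x j - x i) with hP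
    have hCne : ∀ i, C i ≠ 0 := fun i =>
      Finset.prod_ne_zero_iff.mpr fun j hj =>
        sub_ne_zero.mpr fun h => (Finset.mem_erase.mp hj).1 (hyinj h)
    have hPne : ∀ i, P i ≠ 0 := fun i =>
      Finset.prod_ne_zero_iff.mpr fun j hj =>
        sub_ne_zero.mpr fun h => (Finset.mem_erase.mp hj).1 (hinj h)
    have hk : ∀ i : Fin (n + 1), x 0 - y i ≠ 0 := fun i =>
      sub_ne_zero.mpr fun h => (Fin.succ_ne_zero i).symm (hinj h)
    have hPsucc : ∀ i : Fin (n + 1), P i.succ = (x 0 - y i) * C i := by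
      intro i
      exact prod_erase_fin_succ (fun j => x j - x i.succ) i
    set Gy : ℝ → ℝ := fun s => ∑ i, Real.exp (-s * y i) / C i with hGy
    have hGycont : Continuous Gy := by
      apply continuous_finset_sum
      intro i _
      exact (Real.continuous_exp.comp (by fun_prop)).div_const _
    set g : ℝ → ℝ := fun s => Real.exp (-(x 0) * (α - s)) * Gy s with hg
    have hgcont : Continuous g := (Real.continuous_exp.comp (by fun_prop)).mul hGycont
    -- the integral identity
    have hident : (∑ i, Real.exp (-α * x i) / P i) = ∫ s in (0:ℝ)..α, g s := by
      have hsplit : ∀ s : ℝ, g s = ∑ i : Fin (n + 1),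
          (Real.exp (-(x 0) * α) / C i) * Real.exp ((x 0 - y i) * s) := by
        intro s
        rw [hg]
        simp only [hGy, Finset.mul_sum]
        refine Finset.sum_congr rfl fun i _ => ?_
        rw [div_mul_eq_mul_div, ← mul_div_assoc, ← Real.exp_add, ← Real.exp_add]
        congr 2
        ring
      have hInt : ∀ i ∈ (Finset.univ : Finset (Fin (n + 1))), IntervalIntegrable
          (fun s => (Real.exp (-(x 0) * α) / C i) * Real.exp ((x 0 - y i) * s))
          MeasureTheory.volume 0 α := by
        intro i _
        apply Continuous.intervalIntegrable
        fun_prop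
      rw [intervalIntegral.integral_congr (fun s _ => hsplit s),
        intervalIntegral.integral_finset_sum hInt]
      have hterm : ∀ i : Fin (n + 1),
          (∫ s in (0:ℝ)..α, (Real.exp (-(x 0) * α) / C i) * Real.exp ((x 0 - y i) * s))
            = Real.exp (-α * y i) * (P i.succ)⁻¹ - Real.exp (-α * x 0) * (P i.succ)⁻¹ := by
        intro i
        rw [intervalIntegral.integral_const_mul, integral_exp_mul' _ _ (hk i), hPsucc i]
        have he : Real.exp (-(x 0) * α) * Real.exp ((x 0 - y i) * α) = Real.exp (-α * y i) := by
          rw [← Real.exp_add]; congr 1; ring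
        have he2 : Real.exp (-α * x 0) = Real.exp (-(x 0) * α) := by congr 1; ring
        rw [he2, ← he]
        field_simp
      rw [Finset.sum_congr rfl (fun i _ => hterm i), Finset.sum_sub_distrib]
      have hzero : (P 0)⁻¹ + ∑ i : Fin (n + 1), (P i.succ)⁻¹ = 0 := by
        have := sum_inv_prod_sub_eq_zero (m := n + 2) (by omega) x hinj
        rwa [Fin.sum_univ_succ] at this
      have hLHS : (∑ i, Real.exp (-α * x i) / P i)
          = Real.exp (-α * x 0) * (P 0)⁻¹ + ∑ i : Fin (n + 1), Real.exp (-α * y i) * (P i.succ)⁻¹ := by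
        rw [Fin.sum_univ_succ]
        simp only [div_eq_mul_inv]
        rfl
      rw [hLHS, ← Finset.mul_sum]
      have : ∑ i : Fin (n + 1), (P i.succ)⁻¹ = -(P 0)⁻¹ := by linarith
      rw [this]
      ring
    rw [hident]
    have hGyb : ∀ s ∈ Set.Ioo (0:ℝ) α, 0 < Gy s ∧ Gy s < s ^ n / n.factorial :=
      fun s hs => ih y hypos hyinj s hs.1
    have hglt : ∀ s ∈ Set.Ioo (0:ℝ) α, 0 < g s ∧ g s < s ^ n / n.factorial := by
      intro s hs
      obtain ⟨h1, h2⟩ := hGyb s hs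
      constructor
      · exact mul_pos (Real.exp_pos _) h1
      · have hexp : Real.exp (-(x 0) * (α - s)) < 1 := by
          rw [Real.exp_lt_one_iff]
          nlinarith [hs.2]
        calc g s < 1 * Gy s := by
              rw [hg]
              exact mul_lt_mul_of_pos_right hexp h1
          _ = Gy s := one_mul _
          _ < s ^ n / n.factorial := h2
    constructor
    · exact intervalIntegral.intervalIntegral_pos_of_pos_on
        (hgcont.intervalIntegrable 0 α) (fun s hs => (hglt s hs).1) hα
    · have hdiff : 0 < ∫ s in (0:ℝ)..α, (s ^ n / n.factorial - g s) := by
        refine intervalIntegral.intervalIntegral_pos_of_pos_on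
          ((((continuous_pow n).div_const _).sub hgcont).intervalIntegrable 0 α) ?_ hα
        intro s hs
        have := (hglt s hs).2
        linarith
      rw [intervalIntegral.integral_sub
        (((continuous_pow n).div_const _).intervalIntegrable 0 α)
        (hgcont.intervalIntegrable 0 α)] at hdiff
      have hpow : (∫ s in (0:ℝ)..α, s ^ n / n.factorial)
          = α ^ (n + 1) / (n + 1).factorial := by
        rw [intervalIntegral.integral_div, integral_pow]
        rw [Nat.factorial_succ]
        push_cast
        field_simp
        try ring
      rw [hpow] at hdiff
      linarith


theorem exp_neg_divided_difference_bounds (α : ℝ) (hα : 0 < α)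
    (f : ℝ → ℝ) (hfdef : ∀ x ∈ Set.Ioi (0 : ℝ), f x = Real.exp (-α * x))
    (n : ℕ) (hn : 1 ≤ n) (x : Fin n → ℝ) (hx : ∀ i, x i ∈ Set.Ioi (0 : ℝ))
    (hinj : Function.Injective x) :
    0 < ∑ i, f (x i) / ∏ j ∈ Finset.univ.erase i, (x j - x i) ∧
    ∑ i, f (x i) / ∏ j ∈ Finset.univ.erase i, (x j - x i) <
      α ^ (n - 1) / (n - 1).factorial := by
  obtain ⟨m, rfl⟩ : ∃ m, n = m + 1 := ⟨n - 1, by omega⟩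
  have hs : (∑ i, f (x i) / ∏ j ∈ Finset.univ.erase i, (x j - x i))
      = ∑ i, Real.exp (-α * x i) / ∏ j ∈ Finset.univ.erase i, (x j - x i) :=
    Finset.sum_congr rfl fun i _ => by rw [hfdef (x i) (hx i)]
  rw [hs, Nat.add_sub_cancel]
  exact key m x (fun i => hx i) hinj α hα
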